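/- Let G be a finite simple graph on a vertex set V in which every vertex has at least one neighbor, let N(G) be its neighborhood complex, and let κ : V → {1,…,k} be a k-linear coloring of N(G). Then κ is a proper vertex coloring of G: for every edge {x, y} of G, κ(x) ≠ κ(y). -/
import Mathlib


open Finset Function

variable {V : Type} [Fintype V] [DecidableEq V]

/-- A finite abstract simplicial complex on the vertex set `V`: a collection of
finite subsets of `V` closed under taking subsets, containing every singleton. -/
def IsComplex (Δ : Finset (Finset V)) : Prop :=
  (∀ S ∈ Δ, ∀ T ⊆ S, T ∈ Δ) ∧ ∀ v : V, ({v} : Finset V) ∈ Δ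

/-- `F` is a facet of `Δ`, i.e. a face maximal under inclusion. -/
def IsFacet (Δ : Finset (Finset V)) (F : Finset V) : Prop :=
  F ∈ Δ ∧ ∀ G ∈ Δ, F ⊆ G → F = G

/-- `F(v)`: the set of facets of `Δ` containing the vertex `v`. -/
def facetsOf (Δ : Finset (Finset V)) (v : V) : Set (Finset V) :=
  {F | IsFacet Δ F ∧ v ∈ F}

/-- A surjective map `κ : V → {1,…,k}` is a `k`-linear coloring of `Δ` if for every
pair of vertices with the same color the facet sets are comparable by inclusion. -/
def IsLinearColoring {k : ℕ} (Δ : Finset (Finset V)) (κ : V → Fin k) : Prop :=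
  Surjective κ ∧
  ∀ u v : V, κ u = κ v →
    facetsOf Δ u ⊆ facetsOf Δ v ∨ facetsOf Δ v ⊆ facetsOf Δ u

open scoped Classical in
/-- The neighborhood complex of a graph `G`: faces are the sets of vertices
having a common neighbor. -/
noncomputable def nbrCpx (G : SimpleGraph V) : Finset (Finset V) :=
  (Finset.univ : Finset (Finset V)).filter fun S => ∃ z : V, ∀ v ∈ S, G.Adj z v


lemma exists_facet_above (Δ : Finset (Finset V)) (S : Finset V) (hS : S ∈ Δ) :
    ∃ F, IsFacet Δ F ∧ S ⊆ F := by
  classical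
  obtain ⟨F, hF, hmax⟩ := Finset.exists_max_image (Δ.filter fun T => S ⊆ T)
    Finset.card ⟨S, by simp [hS]⟩
  simp only [Finset.mem_filter] at hF
  refine ⟨F, ⟨hF.1, fun T hT hFT => ?_⟩, hF.2⟩
  exact Finset.eq_of_subset_of_card_le hFT
    (hmax T (Finset.mem_filter.2 ⟨hT, hF.2.trans hFT⟩))

lemma key_lemma (G : SimpleGraph V) {x y : V} (hxy : G.Adj x y)
    (h : facetsOf (nbrCpx G) x ⊆ facetsOf (nbrCpx G) y) : False := by
  classical
  set Ny : Finset V := Finset.univ.filter fun v => G.Adj y v with hNy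
  have hmem : Ny ∈ nbrCpx G := by
    simp only [nbrCpx, Finset.mem_filter, Finset.mem_univ, true_and]
    exact ⟨y, fun v hv => by simpa [hNy] using hv⟩
  obtain ⟨F, hF, hsub⟩ := exists_facet_above _ _ hmem
  have hxF : x ∈ F := hsub (by simp [hNy, hxy.symm])
  have hyF : y ∈ F := (h ⟨hF, hxF⟩).2
  have : F ∈ nbrCpx G := hF.1
  simp only [nbrCpx, Finset.mem_filter, Finset.mem_univ, true_and] at this
  obtain ⟨z, hz⟩ := this
  have hzNy : z ∈ Ny := by simp [hNy, (hz y hyF).symm]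
  exact G.irrefl (hz z (hsub hzNy))

/-- A linear coloring of the neighborhood complex of a graph is a proper vertex
coloring of the graph. -/
theorem stmt_19 (G : SimpleGraph V) (hnb : ∀ v : V, ∃ u : V, G.Adj v u)
    {k : ℕ} (κ : V → Fin k) (hκ : IsLinearColoring (nbrCpx G) κ) :
    ∀ x y : V, G.Adj x y → κ x ≠ κ y := by
  intro x y hxy heq
  rcases hκ.2 x y heq with h | h
  · exact (key_lemma G hxy h).elim
  · exact (key_lemma G hxy.symm h).elim
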